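/- Let Δ and Δ° be dual reflexive polytopes with central triangulations T of Δ and T° of Δ°. The map sending (τ,σ) to (σ̂, τ_∞) is an isomorphism of posets from 𝒫^∞(T°,T) to 𝒫^∞(T,T°), where 𝒫^∞ consists of pairs (τ,σ) with τ containing 0 and τ ≠ 0 and σ a boundary simplex with σ ⊂ min(C(τ))^∨, ordered by reverse inclusion in both coordinates. -/
import Mathlib


/-- The standard pairing between the lattice `M = ℤ^d` and its dual `N = ℤ^d`. -/
def latPair {d : ℕ} (w x : Fin d → ℤ) : ℤ := ∑ i, w i * x i

/-- Combinatorial model of a unimodular central triangulation of a reflexive polytope: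
simplices are recorded by their vertex sets (finite sets of lattice points); the
triangulation contains the vertex `0` (the origin, unique interior lattice point), is
closed under passing to nonempty faces, and the join of `0` with any simplex not
containing `0` (i.e. any boundary simplex) is again a simplex. -/
structure CentralTriang (d : ℕ) where
  simp : Finset (Finset (Fin d → ℤ))
  nonempty_mem : ∀ s ∈ simp, s.Nonempty
  zero_mem : ({0} : Finset (Fin d → ℤ)) ∈ simp
  down : ∀ s ∈ simp, ∀ t ⊆ s, t.Nonempty → t ∈ simp
  join : ∀ s ∈ simp, 0 ∉ s → insert 0 s ∈ simp

/-- The poset `𝒫^∞(T', T)`: pairs `(τ, σ)` with `τ ∈ T'` containing `0`, `τ ≠ 0` (i.e.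
`τ ≠ {0}`), `σ` a boundary simplex of `T` (i.e. `0 ∉ σ`), and `σ ⊆ min(C(τ))^∨`; by
reflexivity the latter incidence condition says exactly that every vertex of
`τ_∞ = τ \ {0}` pairs to `1` with every vertex of `σ`. -/
def PinfCond {d : ℕ} (T' T : CentralTriang d)
    (p : Finset (Fin d → ℤ) × Finset (Fin d → ℤ)) : Prop :=
  p.1 ∈ T'.simp ∧ 0 ∈ p.1 ∧ p.1 ≠ {0} ∧ p.2 ∈ T.simp ∧ 0 ∉ p.2 ∧
    ∀ w ∈ p.1.erase 0, ∀ x ∈ p.2, latPair w x = 1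

lemma pinf_step {d : ℕ} (T' T : CentralTriang d)
    (p : Finset (Fin d → ℤ) × Finset (Fin d → ℤ)) (h : PinfCond T' T p) :
    PinfCond T T' (insert 0 p.2, p.1.erase 0) := by
  obtain ⟨h1, h2, h3, h4, h5, h6⟩ := h
  refine ⟨T.join _ h4 h5, Finset.mem_insert_self _ _, ?_, ?_, Finset.notMem_erase _ _, ?_⟩
  · intro hc
    have hc' : insert (0 : Fin d → ℤ) p.2 = {0} := hc
    obtain ⟨x, hx⟩ := T.nonempty_mem _ h4
    have : x ∈ insert (0 : Fin d → ℤ) p.2 := Finset.mem_insert_of_mem hx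
    rw [hc', Finset.mem_singleton] at this
    exact h5 (this ▸ hx)
  · refine T'.down _ h1 _ (Finset.erase_subset _ _) ?_
    exact (Finset.erase_nonempty h2).mpr
      ((Finset.nontrivial_iff_ne_singleton h2).mpr h3)
  · intro w hw x hx
    simp only [Finset.erase_insert h5] at hw
    have := h6 x hx w hw
    simpa [latPair, mul_comm] using this

/-- The map `(τ, σ) ↦ (σ̂, τ_∞) = (conv(0, σ), τ ∩ ∂Δ°)` is an isomorphism
of posets `𝒫^∞(T°, T) → 𝒫^∞(T, T°)`, where both posets are ordered by reverse inclusion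
in both coordinates. -/
theorem pinf_poset_iso {d : ℕ} (T' T : CentralTriang d) :
    ∃ e : {p // PinfCond T' T p} ≃ {p // PinfCond T T' p},
      (∀ p : {p // PinfCond T' T p},
          (e p).1.1 = insert 0 p.1.2 ∧ (e p).1.2 = p.1.1.erase 0) ∧
      (∀ p q : {p // PinfCond T' T p},
          (q.1.1 ⊆ p.1.1 ∧ q.1.2 ⊆ p.1.2) ↔
          ((e q).1.1 ⊆ (e p).1.1 ∧ (e q).1.2 ⊆ (e p).1.2)) := by
  refine ⟨⟨fun p => ⟨(insert 0 p.1.2, p.1.1.erase 0), pinf_step T' T _ p.2⟩,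
            fun p => ⟨(insert 0 p.1.2, p.1.1.erase 0), pinf_step T T' _ p.2⟩,
            fun p => ?_, fun p => ?_⟩, fun p => ⟨rfl, rfl⟩, fun p q => ?_⟩
  · apply Subtype.ext
    exact Prod.ext (Finset.insert_erase p.2.2.1) (Finset.erase_insert p.2.2.2.2.2.1)
  · apply Subtype.ext
    exact Prod.ext (Finset.insert_erase p.2.2.1) (Finset.erase_insert p.2.2.2.2.2.1)
  · constructor
    · rintro ⟨h1, h2⟩
      exact ⟨Finset.insert_subset_insert _ h2, fun x hx =>
        Finset.mem_erase.mpr ⟨(Finset.mem_erase.mp hx).1, h1 (Finset.mem_erase.mp hx).2⟩⟩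
    · rintro ⟨h1, h2⟩
      constructor
      · intro x hx
        rcases eq_or_ne x 0 with rfl | hne
        · exact p.2.2.1
        · have := h2 (Finset.mem_erase.mpr ⟨hne, hx⟩)
          exact (Finset.mem_erase.mp this).2
      · intro x hx
        have := h1 (Finset.mem_insert_of_mem hx)
        rcases Finset.mem_insert.mp this with rfl | h
        · exact absurd hx q.2.2.2.2.2.1
        · exact h
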